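/- Fix a constant c > 0 and define p(r,s) = (√(s² − r + c) + s)/(2(c − r)) + C·s for a real constant C, on the domain {(r,s) : 0 ≤ r < c, s² − r + c > 0}. Then p satisfies s·p_{rs} − p_r + (1/2)·p_{ss} = 0. -/

import Mathlib

/-- partial derivative in the first variable `r` -/
noncomputable def pr (p : ℝ → ℝ → ℝ) (r s : ℝ) : ℝ := deriv (fun r' => p r' s) r

/-- partial derivative in the second variable `s` -/
noncomputable def ps (p : ℝ → ℝ → ℝ) (r s : ℝ) : ℝ := deriv (fun s' => p r s') s

/-- mixed second partial derivative `∂²p/∂r∂s` -/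
noncomputable def prs (p : ℝ → ℝ → ℝ) (r s : ℝ) : ℝ := deriv (fun r' => ps p r' s) r

/-- second partial derivative `∂²p/∂s²` -/
noncomputable def pss (p : ℝ → ℝ → ℝ) (r s : ℝ) : ℝ := deriv (fun s' => ps p r s') s

lemma sqrt_deriv_s (r c s : ℝ) (hq : 0 < s ^ 2 - r + c) :
    HasDerivAt (fun x => Real.sqrt (x ^ 2 - r + c))
      (s / Real.sqrt (s ^ 2 - r + c)) s := by
  have hinner : HasDerivAt (fun x : ℝ => x ^ 2 - r + c) (2 * s) s := by
    simpa using ((hasDerivAt_pow 2 s).sub_const r).add_const c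
  have h := (Real.hasDerivAt_sqrt (ne_of_gt hq)).comp s hinner
  refine h.congr_deriv ?_
  have hu : Real.sqrt (s ^ 2 - r + c) ≠ 0 := by positivity
  field_simp

lemma sqrt_deriv_r (r c s : ℝ) (hq : 0 < s ^ 2 - r + c) :
    HasDerivAt (fun x => Real.sqrt (s ^ 2 - x + c))
      (-1 / (2 * Real.sqrt (s ^ 2 - r + c))) r := by
  have hinner : HasDerivAt (fun x : ℝ => s ^ 2 - x + c) (-1) r := by
    simpa using ((hasDerivAt_id r).const_sub (s ^ 2)).add_const c
  have h := (Real.hasDerivAt_sqrt (ne_of_gt hq)).comp r hinner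
  refine h.congr_deriv ?_
  have hu : Real.sqrt (s ^ 2 - r + c) ≠ 0 := by positivity
  field_simp

/-- `p(r,s) = (√(s² − r + c) + s)/(2(c − r)) + C·s` satisfies
`s·p_{rs} − p_r + (1/2)·p_{ss} = 0` on its domain. -/
theorem stmt_17 (c C : ℝ) (hc : 0 < c) (p : ℝ → ℝ → ℝ)
    (hp : ∀ r s, p r s = (Real.sqrt (s ^ 2 - r + c) + s) / (2 * (c - r)) + C * s) :
    ∀ r s : ℝ, 0 ≤ r → r < c → 0 < s ^ 2 - r + c →
      s * prs p r s - pr p r s + (1 / 2) * pss p r s = 0 := by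
  -- general formula for ps on the open domain
  have hps : ∀ r s : ℝ, r < c → 0 < s ^ 2 - r + c →
      ps p r s = (s / Real.sqrt (s ^ 2 - r + c) + 1) / (2 * (c - r)) + C := by
    intro r s hrc hq
    have hfun : (fun s' => p r s') =
        fun s' => (Real.sqrt (s' ^ 2 - r + c) + s') / (2 * (c - r)) + C * s' :=
      funext fun s' => hp r s'
    rw [ps, hfun]
    have h1 : HasDerivAt
        (fun s' => (Real.sqrt (s' ^ 2 - r + c) + s') / (2 * (c - r)) + C * s')
        ((s / Real.sqrt (s ^ 2 - r + c) + 1) / (2 * (c - r)) + C) s := by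
      have hn := (sqrt_deriv_s r c s hq).add (hasDerivAt_id s)
      have hC : HasDerivAt (fun s' : ℝ => C * s') C s := by
        simpa using (hasDerivAt_id s).const_mul C
      exact (hn.div_const _).add hC
    exact h1.deriv
  intro r s hr hrc hq
  set u := Real.sqrt (s ^ 2 - r + c) with hu_def
  have hu : 0 < u := Real.sqrt_pos.mpr hq
  have hu2 : u ^ 2 = s ^ 2 - r + c := Real.sq_sqrt hq.le
  have hcr : 0 < c - r := by linarith
  -- pr
  have hprval : pr p r s =
      ((-1 / (2 * u)) * (2 * (c - r)) - (u + s) * (2 * (0 - 1))) / (2 * (c - r)) ^ 2 := by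
    have hfun : (fun r' => p r' s) =
        fun r' => (Real.sqrt (s ^ 2 - r' + c) + s) / (2 * (c - r')) + C * s :=
      funext fun r' => hp r' s
    rw [pr, hfun]
    have hden : HasDerivAt (fun r' : ℝ => 2 * (c - r')) (2 * (0 - 1)) r :=
      ((hasDerivAt_const r c).sub (hasDerivAt_id r)).const_mul 2
    have hnum : HasDerivAt (fun r' => Real.sqrt (s ^ 2 - r' + c) + s)
        (-1 / (2 * u)) r := by
      simpa using (sqrt_deriv_r r c s hq).add_const s
    have hD : (2 : ℝ) * (c - r) ≠ 0 := by positivity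
    have h := (hnum.div hden hD).add_const (C * s)
    simpa using h.deriv
  -- prs
  have hprsval : prs p r s =
      (((0 * u - s * (-1 / (2 * u))) / u ^ 2) * (2 * (c - r)) -
        (s / u + 1) * (2 * (0 - 1))) / (2 * (c - r)) ^ 2 := by
    have hev : (fun r' => ps p r' s) =ᶠ[nhds r]
        (fun r' => (s / Real.sqrt (s ^ 2 - r' + c) + 1) / (2 * (c - r')) + C) := by
      have h1 : ∀ᶠ r' in nhds r, r' < c := eventually_lt_nhds hrc
      have h2 : ∀ᶠ r' in nhds r, 0 < s ^ 2 - r' + c := by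
        have hcont : ContinuousAt (fun r' : ℝ => s ^ 2 - r' + c) r := by fun_prop
        exact (continuousAt_const (y := (0:ℝ))).eventually_lt hcont hq
      filter_upwards [h1, h2] with r' h1' h2'
      exact hps r' s h1' h2'
    rw [prs, hev.deriv_eq]
    have hden : HasDerivAt (fun r' : ℝ => 2 * (c - r')) (2 * (0 - 1)) r :=
      ((hasDerivAt_const r c).sub (hasDerivAt_id r)).const_mul 2
    have hD : (2 : ℝ) * (c - r) ≠ 0 := by positivity
    have hnum : HasDerivAt (fun r' => s / Real.sqrt (s ^ 2 - r' + c) + 1)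
        ((0 * u - s * (-1 / (2 * u))) / u ^ 2) r :=
      ((hasDerivAt_const r s).div (sqrt_deriv_r r c s hq) hu.ne').add_const 1
    have h := (hnum.div hden hD).add_const C
    exact h.deriv
  -- pss
  have hpssval : pss p r s =
      ((1 * u - s * (s / u)) / u ^ 2) / (2 * (c - r)) := by
    have hev : (fun s' => ps p r s') =ᶠ[nhds s]
        (fun s' => (s' / Real.sqrt (s' ^ 2 - r + c) + 1) / (2 * (c - r)) + C) := by
      have h2 : ∀ᶠ s' in nhds s, 0 < s' ^ 2 - r + c := by
        have hcont : ContinuousAt (fun s' : ℝ => s' ^ 2 - r + c) s := by fun_prop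
        exact (continuousAt_const (y := (0:ℝ))).eventually_lt hcont hq
      filter_upwards [h2] with s' h2'
      exact hps r s' hrc h2'
    rw [pss, hev.deriv_eq]
    have hnum : HasDerivAt (fun s' => s' / Real.sqrt (s' ^ 2 - r + c) + 1)
        ((1 * u - s * (s / u)) / u ^ 2) s :=
      ((hasDerivAt_id s).div (sqrt_deriv_s r c s hq) hu.ne').add_const 1
    have h := (hnum.div_const (2 * (c - r))).add_const C
    exact h.deriv
  rw [hprval, hprsval, hpssval]
  have hune : u ≠ 0 := hu.ne'
  have hcrne : c - r ≠ 0 := hcr.ne'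
  have hcru : c - r = u ^ 2 - s ^ 2 := by linarith
  rw [hcru]
  have h2 : u ^ 2 - s ^ 2 ≠ 0 := by rw [← hcru]; exact hcrne
  field_simp
  ring
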